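/- Let a < b be real numbers and let η be a real-valued function on nonempty finite subsets of the interval [a,b] that is uniformly continuous with respect to the Hausdorff distance, i.e., for every ε₁ > 0 there exists δ₁ > 0 such that for all nonempty finite sets S, S' ⊆ [a,b] with Hausdorff distance d_H(S,S') < δ₁ one has |η(S) − η(S')| < ε₁. Then for every ε > 0 there exist a natural number K, a continuous function σ : ℝ → ℝ^K, and a continuous function ζ : ℝ^K → ℝ, such that for every nonempty finite set S ⊆ [a,b], |η(S) − ζ(∑_{x∈S} σ(x))| < ε. -/

import Mathlib

open Finset

/-- Universal approximation for sum-pooled per-point encoders (paper's Theorem 2). -/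
theorem universal_approximation_sum_pooling (a b : ℝ) (hab : a < b)
    (η : Finset ℝ → ℝ)
    (hη : ∀ ε₁ > (0 : ℝ), ∃ δ₁ > (0 : ℝ), ∀ S S' : Finset ℝ,
      S.Nonempty → S'.Nonempty →
      (↑S : Set ℝ) ⊆ Set.Icc a b → (↑S' : Set ℝ) ⊆ Set.Icc a b →
      Metric.hausdorffDist (↑S : Set ℝ) (↑S' : Set ℝ) < δ₁ → |η S - η S'| < ε₁) :
    ∀ ε > (0 : ℝ), ∃ (K : ℕ) (σ : ℝ → (Fin K → ℝ)) (ζ : (Fin K → ℝ) → ℝ),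
      Continuous σ ∧ Continuous ζ ∧
      ∀ S : Finset ℝ, S.Nonempty → (↑S : Set ℝ) ⊆ Set.Icc a b →
        |η S - ζ (∑ x ∈ S, σ x)| < ε := by
  intro ε hε
  obtain ⟨δ, hδ, hδη⟩ := hη (ε/2) (by linarith)
  obtain ⟨n, hn⟩ := exists_nat_gt ((b-a)/δ)
  have hba : (0:ℝ) < b - a := by linarith
  have hn0 : (0:ℝ) < (n:ℝ) := lt_trans (div_pos hba hδ) hn
  set h : ℝ := (b-a)/n with hh
  have hh0 : 0 < h := div_pos hba hn0
  have hhδ : h < δ := by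
    rw [div_lt_iff₀ hn0]
    rw [div_lt_iff₀ hδ] at hn
    linarith [hn]
  have hnh : (n:ℝ) * h = b - a := by rw [hh]; field_simp
  set K := n + 1 with hK
  set p : Fin K → ℝ := fun k => a + (k:ℕ) * h with hp
  have hpmem : ∀ k : Fin K, p k ∈ Set.Icc a b := by
    intro k
    have hk : ((k:ℕ):ℝ) ≤ (n:ℝ) := by
      exact_mod_cast Nat.lt_succ_iff.mp k.isLt
    constructor
    · have : 0 ≤ ((k:ℕ):ℝ) * h := by positivity
      simp only [hp]; linarith
    · simp only [hp]
      nlinarith [hk, hh0.le]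
  set σ0 : Fin K → ℝ → ℝ := fun k x => max 0 (1 - |x - p k| / h) with hσ0
  have hσ0nn : ∀ k x, 0 ≤ σ0 k x := fun k x => le_max_left _ _
  set θ : ℝ → ℝ := fun t => min 1 (max 0 (4*t - 1)) with hθ
  have hθc : Continuous θ := by
    apply continuous_const.min
    exact continuous_const.max ((continuous_const.mul continuous_id).sub continuous_const)
  have hθ0 : ∀ t, 0 ≤ θ t := fun t => le_min (by norm_num) (le_max_left _ _)
  have hθ1 : ∀ t, θ t ≤ 1 := fun t => min_le_left _ _
  have hθzero : θ 0 = 0 := by norm_num [hθ]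
  have hθone : ∀ t, (1:ℝ)/2 ≤ t → θ t = 1 := by
    intro t ht
    have h1 : (1:ℝ) ≤ max 0 (4*t - 1) := le_max_of_le_right (by linarith)
    exact min_eq_left h1
  set g : Finset (Fin K) → ℝ := fun P => η (P.image p) with hg
  set ζ : (Fin K → ℝ) → ℝ := fun v => ∑ P ∈ (univ : Finset (Fin K)).powerset,
      ((∏ k ∈ P, θ (v k)) * ∏ k ∈ univ \ P, (1 - θ (v k))) * g P with hζ
  refine ⟨K, fun x k => σ0 k x, ζ, ?_, ?_, ?_⟩
  · apply continuous_pi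
    intro k
    apply continuous_const.max
    exact (continuous_const.sub ((continuous_abs.comp
      (continuous_id.sub continuous_const)).div_const h))
  · apply continuous_finset_sum
    intro P _
    exact ((continuous_finset_prod _ fun k _ => hθc.comp (continuous_apply k)).mul
      (continuous_finset_prod _ fun k _ =>
        continuous_const.sub (hθc.comp (continuous_apply k)))).mul continuous_const
  · intro S hSne hSsub
    set F : Fin K → ℝ := ∑ x ∈ S, (fun k => σ0 k x) with hF
    have hFk : ∀ k, F k = ∑ x ∈ S, σ0 k x := by
      intro k; simp [hF, Finset.sum_apply]
    have hFnn : ∀ k, 0 ≤ F k := by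
      intro k; rw [hFk]; exact Finset.sum_nonneg fun x _ => hσ0nn k x
    set w : Finset (Fin K) → ℝ :=
      fun P => (∏ k ∈ P, θ (F k)) * ∏ k ∈ univ \ P, (1 - θ (F k)) with hw
    have hwnn : ∀ P, 0 ≤ w P := by
      intro P
      apply mul_nonneg
      · exact Finset.prod_nonneg fun k _ => hθ0 _
      · exact Finset.prod_nonneg fun k _ => by linarith [hθ1 (F k)]
    have hwsum : ∑ P ∈ (univ : Finset (Fin K)).powerset, w P = 1 := by
      have := (Finset.prod_add (fun k => θ (F k)) (fun k => 1 - θ (F k)) univ).symm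
      rw [hw]
      rw [this]
      have : ∀ k ∈ (univ : Finset (Fin K)), θ (F k) + (1 - θ (F k)) = 1 := fun k _ => by ring
      rw [Finset.prod_congr rfl this, Finset.prod_const_one]
    -- Fact A: θ (F k) ≠ 0 → ∃ x ∈ S, |x - p k| < h
    have factA : ∀ k, θ (F k) ≠ 0 → ∃ x ∈ S, |x - p k| < h := by
      intro k hk
      have hFknz : F k ≠ 0 := by
        intro h0; rw [h0, hθzero] at hk; exact hk rfl
      rw [hFk] at hFknz
      obtain ⟨x, hxS, hx⟩ := Finset.exists_ne_zero_of_sum_ne_zero hFknz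
      refine ⟨x, hxS, ?_⟩
      have : 0 < 1 - |x - p k| / h := by
        rcases lt_or_ge 0 (1 - |x - p k| / h) with h1 | h1
        · exact h1
        · exfalso; apply hx; simp only [hσ0]; rw [max_eq_left h1]
      have := (div_lt_one hh0).mp (by linarith : |x - p k| / h < 1)
      linarith
    -- Fact B: every point of S is within h/2 of a grid point k with θ (F k) = 1
    have factB : ∀ x ∈ S, ∃ k : Fin K, |x - p k| ≤ h/2 ∧ θ (F k) = 1 := by
      intro x hxS
      have hx := hSsub hxS
      set t : ℝ := (x - a) / h with htdef
      have ht0 : 0 ≤ t := div_nonneg (by linarith [hx.1]) hh0.le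
      have htn : t ≤ n := by
        rw [htdef, div_le_iff₀ hh0]
        calc x - a ≤ b - a := by linarith [hx.2]
          _ = (n:ℝ) * h := hnh.symm
      set k0 : ℕ := ⌊t + 1/2⌋₊ with hk0def
      have hk0lt : k0 < K := by
        have h2 : t + 1/2 < ((n+1 : ℕ):ℝ) := by push_cast; linarith
        exact (Nat.floor_lt (by linarith)).mpr h2
      set k : Fin K := ⟨k0, hk0lt⟩ with hkdef
      have hfl : (k0:ℝ) ≤ t + 1/2 := Nat.floor_le (by linarith)
      have hfu : t + 1/2 < (k0:ℝ) + 1 := Nat.lt_floor_add_one _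
      have htk : |t - (k0:ℝ)| ≤ 1/2 := by
        rw [abs_le]; constructor <;> linarith
      have hxval : x = a + t * h := by
        rw [htdef]; field_simp; ring
      have hdist : |x - p k| ≤ h/2 := by
        have : x - p k = (t - (k0:ℝ)) * h := by
          simp only [hp, hkdef]
          rw [hxval]; ring
        rw [this, abs_mul, abs_of_pos hh0]
        nlinarith [htk, hh0.le]
      refine ⟨k, hdist, ?_⟩
      have hσhalf : (1:ℝ)/2 ≤ σ0 k x := by
        have h1 : |x - p k| / h ≤ 1/2 := by
          rw [div_le_iff₀ hh0]; linarith
        have : (1:ℝ)/2 ≤ 1 - |x - p k| / h := by linarith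
        exact le_trans this (le_max_right _ _)
      have hFhalf : (1:ℝ)/2 ≤ F k := by
        rw [hFk]
        calc (1:ℝ)/2 ≤ σ0 k x := hσhalf
          _ ≤ ∑ y ∈ S, σ0 k y :=
            Finset.single_le_sum (fun y _ => hσ0nn k y) hxS
      exact hθone _ hFhalf
    -- Per-pattern bound
    have hbound : ∀ P ∈ (univ : Finset (Fin K)).powerset, w P ≠ 0 → |η S - g P| < ε/2 := by
      intro P _ hP0
      have hwP : w P = (∏ k ∈ P, θ (F k)) * ∏ k ∈ univ \ P, (1 - θ (F k)) := rfl
      have hprodθ : ∀ k ∈ P, θ (F k) ≠ 0 := by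
        intro k hk hz
        apply hP0
        rw [hwP, Finset.prod_eq_zero hk hz, zero_mul]
      have hprodc : ∀ k, k ∉ P → θ (F k) ≠ 1 := by
        intro k hk hz
        apply hP0
        have hkmem : k ∈ univ \ P := Finset.mem_sdiff.mpr ⟨Finset.mem_univ k, hk⟩
        rw [hwP, Finset.prod_eq_zero hkmem (by rw [hz]; ring), mul_zero]
      have factB' : ∀ x ∈ S, ∃ k ∈ P, |x - p k| ≤ h/2 := by
        intro x hxS
        obtain ⟨k, hk1, hk2⟩ := factB x hxS
        refine ⟨k, ?_, hk1⟩
        by_contra hkP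
        exact hprodc k hkP hk2
      set T : Finset ℝ := P.image p with hT
      have hPne : P.Nonempty := by
        obtain ⟨x, hxS⟩ := hSne
        obtain ⟨k, hkP, _⟩ := factB' x hxS
        exact ⟨k, hkP⟩
      have hTne : T.Nonempty := hPne.image p
      have hTsub : (↑T : Set ℝ) ⊆ Set.Icc a b := by
        intro y hy
        simp only [hT, Finset.coe_image, Set.mem_image, Finset.mem_coe] at hy
        obtain ⟨k, _, rfl⟩ := hy
        exact hpmem k
      have hd : Metric.hausdorffDist (↑S : Set ℝ) (↑T : Set ℝ) ≤ h := by
        apply Metric.hausdorffDist_le_of_mem_dist hh0.le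
        · intro x hx
          obtain ⟨k, hkP, hk2⟩ := factB' x hx
          refine ⟨p k, ?_, ?_⟩
          · simp only [hT, Finset.coe_image, Set.mem_image, Finset.mem_coe]
            exact ⟨k, hkP, rfl⟩
          · rw [Real.dist_eq]; linarith
        · intro y hy
          simp only [hT, Finset.coe_image, Set.mem_image, Finset.mem_coe] at hy
          obtain ⟨k, hkP, rfl⟩ := hy
          obtain ⟨x, hxS, hxk⟩ := factA k (hprodθ k hkP)
          refine ⟨x, hxS, ?_⟩
          rw [Real.dist_eq, abs_sub_comm]; linarith
      exact hδη S T hSne hTne hSsub hTsub (lt_of_le_of_lt hd hhδ)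
    -- Assemble
    have hζF : ζ F = ∑ P ∈ (univ : Finset (Fin K)).powerset, w P * g P := rfl
    have hζeq : ζ (∑ x ∈ S, fun k => σ0 k x) = ζ F := by rw [hF]
    rw [hζeq]
    have key : η S - ζ F = ∑ P ∈ (univ : Finset (Fin K)).powerset, w P * (η S - g P) := by
      rw [hζF]
      have h1 : ∑ P ∈ (univ : Finset (Fin K)).powerset, w P * (η S - g P)
          = (∑ P ∈ (univ : Finset (Fin K)).powerset, w P) * η S
            - ∑ P ∈ (univ : Finset (Fin K)).powerset, w P * g P := by
        rw [Finset.sum_mul, ← Finset.sum_sub_distrib]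
        exact Finset.sum_congr rfl fun P _ => by ring
      rw [h1, hwsum, one_mul]
    have habs : |η S - ζ F| ≤ ε/2 := by
      rw [key]
      calc |∑ P ∈ (univ : Finset (Fin K)).powerset, w P * (η S - g P)|
          ≤ ∑ P ∈ (univ : Finset (Fin K)).powerset, |w P * (η S - g P)| :=
            Finset.abs_sum_le_sum_abs _ _
        _ ≤ ∑ P ∈ (univ : Finset (Fin K)).powerset, w P * (ε/2) := by
            apply Finset.sum_le_sum
            intro P hP
            rw [abs_mul, abs_of_nonneg (hwnn P)]
            by_cases h0 : w P = 0
            · rw [h0]; simp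
            · exact mul_le_mul_of_nonneg_left (le_of_lt (hbound P hP h0)) (hwnn P)
        _ = ε/2 := by rw [← Finset.sum_mul, hwsum, one_mul]
    linarith [habs]
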